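/- arXiv:2107.02465 — 2 statements merged into one kernel-verified Lean document; each statement's English description precedes it below -/
import Mathlib

section
/- Let 𝒫 be a nonempty set of Borel probability measures on ℝ^n with sublinear expectation Ê[ξ] := sup_{P∈𝒫} E_P[ξ], let X_1,…,X_n be the coordinate random variables, and let F_j := σ(X_1,…,X_j). Fix 1 ≤ j < n and suppose X_{j+1} is independent of (X_1,…,X_j) under Ê, and that Ê[|X_{j+1}|^{1+α}] < ∞ for some α > 0. Then for every Borel probability measure P on ℝ^n satisfying E_P[φ] ≤ Ê[φ] for all bounded Lipschitz φ : ℝ^n → ℝ, one has −Ê[−X_{j+1}] ≤ E_P[X_{j+1} | F_j] ≤ Ê[X_{j+1}], P-almost surely. -/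
open MeasureTheory

/-- Sublinear expectation on `ℝ^n` associated with a set of probability measures:
`Ê[ξ] = sup_{P ∈ Pset} E_P[ξ]`. -/
noncomputable def SE (n : ℕ) (Pset : Set (Measure (Fin n → ℝ)))
    (ξ : (Fin n → ℝ) → ℝ) : ℝ :=
  ⨆ P : Pset, ∫ x, ξ x ∂(P : Measure (Fin n → ℝ))

/-- Bounded Lipschitz real-valued functions. -/
def BLip {E : Type*} [PseudoMetricSpace E] (φ : E → ℝ) : Prop :=
  (∃ K : NNReal, LipschitzWith K φ) ∧ ∃ M : ℝ, ∀ x, |φ x| ≤ M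

lemma blip_comp {E F : Type*} [PseudoMetricSpace E] [PseudoMetricSpace F]
    {φ : F → ℝ} (h : BLip φ) {g : E → F} {K : NNReal} (hg : LipschitzWith K g) :
    BLip (fun x => φ (g x)) := by
  obtain ⟨⟨K₁, h₁⟩, M, hM⟩ := h
  exact ⟨⟨K₁ * K, h₁.comp hg⟩, M, fun x => hM _⟩

lemma blip_mul {E : Type*} [PseudoMetricSpace E] {f g : E → ℝ}
    (hf : BLip f) (hg : BLip g) : BLip (fun x => f x * g x) := by
  obtain ⟨⟨K₁, h₁⟩, M₁, hM₁⟩ := hf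
  obtain ⟨⟨K₂, h₂⟩, M₂, hM₂⟩ := hg
  refine ⟨⟨K₁ * M₂.toNNReal + K₂ * M₁.toNNReal,
    LipschitzWith.of_dist_le_mul fun x y => ?_⟩, |M₁ * M₂|, fun x => ?_⟩
  · have h10 : (0:ℝ) ≤ M₁ := le_trans (abs_nonneg _) (hM₁ x)
    have h20 : (0:ℝ) ≤ M₂ := le_trans (abs_nonneg _) (hM₂ x)
    have hd1 := h₁.dist_le_mul x y
    have hd2 := h₂.dist_le_mul x y
    have key : dist (f x * g x) (f y * g y)
        ≤ |f x| * dist (g x) (g y) + dist (f x) (f y) * |g y| := by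
      simp only [Real.dist_eq]
      calc |f x * g x - f y * g y| = |f x * (g x - g y) + (f x - f y) * g y| := by ring_nf
        _ ≤ |f x * (g x - g y)| + |(f x - f y) * g y| := abs_add_le _ _
        _ = |f x| * |g x - g y| + |f x - f y| * |g y| := by rw [abs_mul, abs_mul]
    push_cast [Real.coe_toNNReal']
    rw [max_eq_left h10, max_eq_left h20]
    have := hM₁ x
    have := hM₂ y
    have := abs_nonneg (f x - f y)
    have hK₁ : (0:ℝ) ≤ K₁ := K₁.coe_nonneg
    have hK₂ : (0:ℝ) ≤ K₂ := K₂.coe_nonneg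
    have hgd : (0:ℝ) ≤ dist (g x) (g y) := dist_nonneg
    have hfd : (0:ℝ) ≤ dist (f x) (f y) := dist_nonneg
    have habs : (0:ℝ) ≤ |f x| := abs_nonneg _
    nlinarith [dist_nonneg (x := x) (y := y)]
  · have h10 : (0:ℝ) ≤ M₁ := le_trans (abs_nonneg _) (hM₁ x)
    have h20 : (0:ℝ) ≤ M₂ := le_trans (abs_nonneg _) (hM₂ x)
    rw [abs_mul, abs_of_nonneg (mul_nonneg h10 h20)]
    exact mul_le_mul (hM₁ x) (hM₂ x) (abs_nonneg _) h10

lemma lip_restrict {n m : ℕ} (g : Fin m → Fin n) :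
    LipschitzWith 1 (fun (x : Fin n → ℝ) (i : Fin m) => x (g i)) := by
  refine LipschitzWith.of_dist_le_mul fun x y => ?_
  push_cast
  rw [one_mul]
  exact dist_pi_le_iff dist_nonneg |>.2 fun i => dist_le_pi_dist x y (g i)

lemma lip_eval {n : ℕ} (k : Fin n) : LipschitzWith 1 (fun (x : Fin n → ℝ) => x k) := by
  refine LipschitzWith.of_dist_le_mul fun x y => ?_
  push_cast
  rw [one_mul]
  exact dist_le_pi_dist x y k

noncomputable def trunc (N : ℝ) (x : ℝ) : ℝ := max (min x N) (-N)

lemma lip_trunc (N : ℝ) : LipschitzWith 1 (trunc N) := by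
  refine LipschitzWith.of_dist_le_mul fun x y => ?_
  push_cast
  rw [one_mul, Real.dist_eq, Real.dist_eq]
  calc |trunc N x - trunc N y| ≤ |min x N - min y N| := abs_max_sub_max_le_abs _ _ _
    _ ≤ max |x - y| |N - N| := abs_min_sub_min_le_max _ _ _ _
    _ ≤ |x - y| := by simp

lemma trunc_abs_le (N x : ℝ) (hN : 0 ≤ N) : |trunc N x| ≤ N := by
  rw [abs_le]; unfold trunc
  constructor
  · exact le_max_right _ _
  · exact max_le (min_le_right _ _) (by linarith)

lemma trunc_abs_le' (N x : ℝ) (hN : 0 ≤ N) : |trunc N x| ≤ |x| := by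
  unfold trunc
  rcases le_total x 0 with h | h
  · rw [min_eq_left (by linarith)]
    have hmax : max x (-N) ≤ 0 := max_le h (by linarith)
    rw [abs_of_nonpos hmax, abs_of_nonpos h]
    exact neg_le_neg (le_max_left _ _)
  · rw [max_eq_left (le_trans (by linarith) (le_min h hN)), abs_of_nonneg h,
      abs_of_nonneg (le_min h hN)]
    exact min_le_left _ _

lemma trunc_eq_of_abs_le {N x : ℝ} (h : |x| ≤ N) : trunc N x = x := by
  rw [abs_le] at h
  unfold trunc
  rw [min_eq_left h.2, max_eq_left h.1]

lemma ae_nonneg_of_setIntegral_m {Ω : Type*} {m m0 : MeasurableSpace Ω} (hm : m ≤ m0)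
    (P : Measure Ω) [IsFiniteMeasure P] {g : Ω → ℝ}
    (hgm : StronglyMeasurable[m] g) (hgi : Integrable g P)
    (h : ∀ s, MeasurableSet[m] s → 0 ≤ ∫ y in s, g y ∂P) : 0 ≤ᵐ[P] g := by
  have hti : Integrable g (P.trim hm) := hgi.trim hm hgm
  refine ae_of_ae_trim hm (ae_nonneg_of_forall_setIntegral_nonneg hti fun s hs _ => ?_)
  rw [← setIntegral_trim hm hgm hs]
  exact h s hs

lemma setIntegral_nonneg_of_blip_tests {k : ℕ} {Ω : Type*} [MeasurableSpace Ω]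
    (P : Measure Ω) [IsFiniteMeasure P]
    (π : Ω → (Fin k → ℝ)) (hπ : Measurable π)
    (f : Ω → ℝ) (hf : Integrable f P)
    (h : ∀ ψ : (Fin k → ℝ) → ℝ, BLip ψ → (∀ z, 0 ≤ ψ z) → (∀ z, ψ z ≤ 1) →
      0 ≤ ∫ y, ψ (π y) * f y ∂P) :
    ∀ B : Set (Fin k → ℝ), MeasurableSet B → 0 ≤ ∫ y in π ⁻¹' B, f y ∂P := by
  -- Step 1: closed sets
  have hclosed : ∀ F : Set (Fin k → ℝ), IsClosed F → 0 ≤ ∫ y in π ⁻¹' F, f y ∂P := by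
    intro F hF
    rcases F.eq_empty_or_nonempty with rfl | hFne
    · simp
    set ψ : ℕ → (Fin k → ℝ) → ℝ := fun m z => max (1 - m * Metric.infDist z F) 0 with hψdef
    have hψlip : ∀ m : ℕ, LipschitzWith m (ψ m) := by
      intro m
      have l1 : LipschitzWith m (fun t : ℝ => max (1 - m * t) 0) := by
        refine LipschitzWith.of_dist_le_mul fun a b => ?_
        rw [Real.dist_eq, Real.dist_eq]
        calc |max (1 - m * a) 0 - max (1 - m * b) 0| ≤ |(1 - m * a) - (1 - m * b)| :=
              abs_max_sub_max_le_abs _ _ _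
          _ = (m : ℝ) * |a - b| := by rw [show (1 - m * a) - (1 - m * b) = m * (b - a) by ring,
              abs_mul, abs_sub_comm, Nat.abs_cast]
      simpa [Function.comp_def, hψdef] using l1.comp (Metric.lipschitz_infDist_pt F)
    have hψ0 : ∀ m z, 0 ≤ ψ m z := fun m z => le_max_right _ _
    have hψ1 : ∀ m z, ψ m z ≤ 1 := by
      intro m z
      refine max_le ?_ zero_le_one
      have : 0 ≤ (m : ℝ) * Metric.infDist z F :=
        mul_nonneg (Nat.cast_nonneg m) Metric.infDist_nonneg
      linarith
    have htend : ∀ y : Ω, Filter.Tendsto (fun m : ℕ => ψ m (π y) * f y) Filter.atTop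
        (nhds ((π ⁻¹' F).indicator f y)) := by
      intro y
      by_cases hy : π y ∈ F
      · have hd : Metric.infDist (π y) F = 0 := Metric.infDist_zero_of_mem hy
        have heq : ∀ m : ℕ, ψ m (π y) * f y = f y := by
          intro m; simp [hψdef, hd]
        rw [Set.indicator_of_mem (show y ∈ π ⁻¹' F from hy) f]
        simpa [heq] using (tendsto_const_nhds :
          Filter.Tendsto (fun _ : ℕ => f y) Filter.atTop (nhds (f y)))
      · have hd : 0 < Metric.infDist (π y) F := (hF.notMem_iff_infDist_pos hFne).1 hy
        rw [Set.indicator_of_notMem (show y ∉ π ⁻¹' F from hy) f]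
        have hev : ∀ᶠ m : ℕ in Filter.atTop, (0:ℝ) = ψ m (π y) * f y := by
          filter_upwards [Filter.eventually_ge_atTop
            ⌈1 / Metric.infDist (π y) F⌉₊] with m hm
          have h1 : 1 / Metric.infDist (π y) F ≤ (m:ℝ) :=
            le_trans (Nat.le_ceil _) (by exact_mod_cast hm)
          rw [div_le_iff₀ hd] at h1
          have : 1 - (m:ℝ) * Metric.infDist (π y) F ≤ 0 := by nlinarith
          simp [hψdef, max_eq_right this]
        exact Filter.Tendsto.congr' hev tendsto_const_nhds
    have hmeas : ∀ m : ℕ, AEStronglyMeasurable (fun y => ψ m (π y) * f y) P :=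
      fun m => (((hψlip m).continuous.measurable.comp hπ).aestronglyMeasurable).mul hf.1
    have hbd : ∀ m : ℕ, ∀ᵐ y ∂P, ‖ψ m (π y) * f y‖ ≤ |f y| := by
      intro m
      refine Filter.Eventually.of_forall fun y => ?_
      rw [Real.norm_eq_abs, abs_mul]
      calc |ψ m (π y)| * |f y| ≤ 1 * |f y| := by
            refine mul_le_mul_of_nonneg_right ?_ (abs_nonneg _)
            rw [abs_of_nonneg (hψ0 _ _)]; exact hψ1 _ _
        _ = |f y| := one_mul _
    have hint : Filter.Tendsto (fun m : ℕ => ∫ y, ψ m (π y) * f y ∂P) Filter.atTop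
        (nhds (∫ y, (π ⁻¹' F).indicator f y ∂P)) :=
      tendsto_integral_of_dominated_convergence (fun y => |f y|) hmeas hf.abs hbd
        (Filter.Eventually.of_forall htend)
    have h0 : ∀ m : ℕ, (0:ℝ) ≤ ∫ y, ψ m (π y) * f y ∂P := by
      intro m
      refine h (ψ m) ⟨⟨m, hψlip m⟩, 1, fun z => ?_⟩ (hψ0 m) (hψ1 m)
      rw [abs_of_nonneg (hψ0 _ _)]; exact hψ1 _ _
    have hfin := le_of_tendsto_of_tendsto' tendsto_const_nhds hint h0
    rwa [integral_indicator (hπ hF.measurableSet)] at hfin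
  -- Step 2: general Borel sets via inner regularity
  intro B hB
  set ν := Measure.map π (P.withDensity fun y => (‖f y‖₊ : ENNReal)) with hν
  haveI : IsFiniteMeasure ν := by
    constructor
    rw [hν, Measure.map_apply hπ MeasurableSet.univ, Set.preimage_univ,
      withDensity_apply _ MeasurableSet.univ, Measure.restrict_univ]
    exact hf.2
  have hνt : ∀ t : Set (Fin k → ℝ), MeasurableSet t →
      ∫ y in π ⁻¹' t, |f y| ∂P = (ν t).toReal := by
    intro t ht
    rw [hν, Measure.map_apply hπ ht, withDensity_apply _ (hπ ht)]
    have := integral_norm_eq_lintegral_enorm (hf.1.restrict (s := π ⁻¹' t))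
    simpa [Real.norm_eq_abs, enorm_eq_nnnorm] using this
  refine le_of_forall_pos_le_add fun ε hε => ?_
  obtain ⟨F, hFB, hFc, hFlt⟩ := hB.exists_isClosed_diff_lt (measure_ne_top ν B)
    (ε := ENNReal.ofReal ε) (by simp [hε, ne_of_gt])
  have hsplit : ∫ y in π ⁻¹' B, f y ∂P
      = ∫ y in π ⁻¹' F, f y ∂P + ∫ y in π ⁻¹' (B \ F), f y ∂P := by
    rw [← setIntegral_union]
    · rw [← Set.preimage_union, Set.union_diff_cancel hFB]
    · exact (Set.disjoint_sdiff_right).preimage π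
    · exact hπ (hB.diff hFc.measurableSet)
    · exact hf.integrableOn
    · exact hf.integrableOn
  have habs : |∫ y in π ⁻¹' (B \ F), f y ∂P| ≤ ∫ y in π ⁻¹' (B \ F), |f y| ∂P := by
    simpa [Real.norm_eq_abs] using
      norm_integral_le_integral_norm (μ := P.restrict (π ⁻¹' (B \ F))) f
  have hle : (ν (B \ F)).toReal ≤ ε :=
    ENNReal.toReal_le_of_le_ofReal hε.le hFlt.le
  have h2 := hνt _ (hB.diff hFc.measurableSet)
  have h3 := hclosed F hFc
  rw [hsplit]
  have h4 := neg_abs_le (∫ y in π ⁻¹' (B \ F), f y ∂P)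
  linarith

lemma blip_sub_const {E : Type*} [PseudoMetricSpace E] {f : E → ℝ}
    (h : BLip f) (c : ℝ) : BLip (fun x => f x - c) := by
  obtain ⟨⟨K, hK⟩, M, hM⟩ := h
  refine ⟨⟨K, LipschitzWith.of_dist_le_mul fun x y => ?_⟩, M + |c|, fun x => ?_⟩
  · simpa [Real.dist_eq, sub_sub_sub_cancel_right] using hK.dist_le_mul x y
  · calc |f x - c| ≤ |f x| + |c| := abs_sub _ _
      _ ≤ M + |c| := by linarith [hM x]

lemma lip_mul_const (e : ℝ) : LipschitzWith (Real.nnabs e) (fun t : ℝ => e * t) := by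
  refine LipschitzWith.of_dist_le_mul fun x y => ?_
  rw [Real.dist_eq, Real.dist_eq, ← mul_sub, abs_mul]
  simp [Real.coe_nnabs]

lemma trunc_sub_abs_le {N t : ℝ} (hN : 0 ≤ N) : |trunc N t - t| ≤ |t| := by
  rcases le_or_gt |t| N with h | h
  · rw [trunc_eq_of_abs_le h]; simpa using abs_nonneg t
  rcases le_total 0 t with ht | ht
  · have htN : N < t := by rwa [abs_of_nonneg ht] at h
    have : trunc N t = N := by
      unfold trunc; rw [min_eq_right htN.le, max_eq_left (by linarith)]
    rw [this, abs_of_nonneg ht, abs_of_nonpos (by linarith)]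
    linarith
  · have htN : t < -N := by rw [abs_of_nonpos ht] at h; linarith
    have : trunc N t = -N := by
      unfold trunc; rw [min_eq_left (by linarith), max_eq_right (by linarith)]
    rw [this, abs_of_nonpos ht, abs_of_nonneg (by linarith)]
    linarith

lemma trunc_sub_le_rpow {N t α : ℝ} (hN : 1 ≤ N) (hα : 0 < α) :
    |trunc N t - t| ≤ |t| ^ (1 + α) / N ^ α := by
  have hNpos : (0:ℝ) < N := by linarith
  have hNα : (0:ℝ) < N ^ α := Real.rpow_pos_of_pos hNpos α
  rcases le_or_gt |t| N with h | h
  · rw [trunc_eq_of_abs_le h]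
    simp only [sub_self, abs_zero]
    positivity
  · have h1t : (1:ℝ) ≤ |t| := le_trans hN h.le
    have htpos : (0:ℝ) < |t| := by linarith
    refine le_trans (trunc_sub_abs_le hNpos.le) ?_
    rw [le_div_iff₀ hNα]
    calc |t| * N ^ α ≤ |t| * |t| ^ α := by
          refine mul_le_mul_of_nonneg_left ?_ (abs_nonneg t)
          exact Real.rpow_le_rpow hNpos.le h.le hα.le
      _ = |t| ^ (1 + α) := by
          rw [Real.rpow_add htpos, Real.rpow_one]

lemma ciSup_sub_self_nonneg {ι : Type*} [Nonempty ι] {f : ι → ℝ}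
    (hb : BddAbove (Set.range f)) : (⨆ i, (f i - ⨆ i, f i)) = 0 := by
  have hb' : BddAbove (Set.range fun i => f i - ⨆ i, f i) := by
    obtain ⟨b, hbb⟩ := hb
    exact ⟨b - ⨆ i, f i, by rintro r ⟨i, rfl⟩; exact sub_le_sub_right (hbb ⟨i, rfl⟩) _⟩
  refine le_antisymm (ciSup_le fun i => sub_nonpos.2 (le_ciSup hb i)) ?_
  by_contra hlt
  push_neg at hlt
  have : ∀ i, f i ≤ (⨆ i, (f i - ⨆ i, f i)) + ⨆ i, f i := by
    intro i
    have := le_ciSup hb' i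
    linarith
  have := ciSup_le this
  linarith

/-- Proposition 2.1: if `X_{j+1}` is independent of `(X_1, …, X_j)` under the
sublinear expectation and has a finite `(1+α)`-moment, then for every probability
measure `P` dominated by `Ê` on bounded Lipschitz functions, the conditional
expectation of `X_{j+1}` given `σ(X_1, …, X_j)` lies in `[-Ê[-X_{j+1}], Ê[X_{j+1}]]`
`P`-almost surely. -/
theorem condexp_bounds_of_indep
    (n j : ℕ) (hj1 : 1 ≤ j) (hjn : j < n)
    (Pset : Set (Measure (Fin n → ℝ))) (hne : Pset.Nonempty)
    (hprob : ∀ Q ∈ Pset, IsProbabilityMeasure Q)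
    (hindep : ∀ φ : (Fin (j + 1) → ℝ) → ℝ, BLip φ →
      SE n Pset (fun x => φ (fun i => x (Fin.castLE hjn i))) =
        SE n Pset (fun x => SE n Pset (fun x' =>
          φ (Fin.snoc (fun i : Fin j => x (Fin.castLE hjn.le i)) (x' ⟨j, hjn⟩)))))
    (α : ℝ) (hα : 0 < α)
    (hint : ∀ Q ∈ Pset, Integrable (fun x : Fin n → ℝ => |x ⟨j, hjn⟩| ^ (1 + α)) Q)
    (hmom : BddAbove
      ((fun Q : Measure (Fin n → ℝ) => ∫ x, |x ⟨j, hjn⟩| ^ (1 + α) ∂Q) '' Pset))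
    (P : Measure (Fin n → ℝ)) [IsProbabilityMeasure P]
    (hP : ∀ φ : (Fin n → ℝ) → ℝ, BLip φ → ∫ x, φ x ∂P ≤ SE n Pset φ) :
    ∀ᵐ x ∂P,
      -(SE n Pset (fun y => -(y ⟨j, hjn⟩))) ≤
          (P[fun y : Fin n → ℝ => y ⟨j, hjn⟩ |
            MeasurableSpace.comap
              (fun y : Fin n → ℝ => fun i : Fin j => y (Fin.castLE hjn.le i))
              inferInstance]) x ∧
        (P[fun y : Fin n → ℝ => y ⟨j, hjn⟩ |
            MeasurableSpace.comap
              (fun y : Fin n → ℝ => fun i : Fin j => y (Fin.castLE hjn.le i))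
              inferInstance]) x ≤ SE n Pset (fun y => y ⟨j, hjn⟩) := by

  classical
  haveI : Nonempty ↥Pset := hne.to_subtype
  obtain ⟨M₀, hM₀u⟩ := hmom
  have hM₀ : ∀ Q ∈ Pset, ∫ x, |x ⟨j, hjn⟩| ^ (1 + α) ∂Q ≤ M₀ := fun Q hQ =>
    hM₀u ⟨Q, hQ, rfl⟩
  have hmomnn : ∀ Q ∈ Pset, 0 ≤ ∫ x, |x ⟨j, hjn⟩| ^ (1 + α) ∂Q := fun Q hQ =>
    integral_nonneg fun x => Real.rpow_nonneg (abs_nonneg _) _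
  have hM₀0 : 0 ≤ M₀ :=
    le_trans (hmomnn _ hne.choose_spec) (hM₀ _ hne.choose_spec)
  set X : (Fin n → ℝ) → ℝ := fun y => y ⟨j, hjn⟩ with hXdef
  set π : (Fin n → ℝ) → (Fin j → ℝ) := fun y i => y (Fin.castLE hjn.le i) with hπdef
  have hπ : Measurable π := measurable_pi_lambda _ fun i => measurable_pi_apply _
  have hXmeas : Measurable X := measurable_pi_apply _
  have habs : ∀ t : ℝ, |t| ≤ 1 + |t| ^ (1 + α) := by
    intro t
    rcases le_total |t| 1 with h | h
    · have : (0:ℝ) ≤ |t| ^ (1 + α) := Real.rpow_nonneg (abs_nonneg _) _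
      linarith
    · have h2 : |t| ^ (1:ℝ) ≤ |t| ^ (1 + α) :=
        Real.rpow_le_rpow_of_exponent_le h (by linarith)
      rw [Real.rpow_one] at h2
      linarith
  -- integrability facts under each Q ∈ Pset
  have hQfacts : ∀ Q ∈ Pset, Integrable X Q ∧ ∫ y, |X y| ∂Q ≤ 1 + M₀ := by
    intro Q hQ
    haveI := hprob Q hQ
    have h1 : Integrable (fun y => 1 + |X y| ^ (1 + α)) Q :=
      (integrable_const 1).add (hint Q hQ)
    have hXint : Integrable X Q :=
      h1.mono' hXmeas.aestronglyMeasurable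
        (Filter.Eventually.of_forall fun y => by rw [Real.norm_eq_abs]; exact habs (X y))
    refine ⟨hXint, ?_⟩
    have h2 : ∫ y, |X y| ∂Q ≤ ∫ y, (1 + |X y| ^ (1 + α)) ∂Q :=
      integral_mono hXint.abs h1 fun y => habs (X y)
    rw [integral_add (integrable_const 1) (hint Q hQ), integral_const] at h2
    simp only [measure_univ, probReal_univ, smul_eq_mul, one_mul] at h2
    linarith [hM₀ Q hQ]
  have bdd : ∀ {ξ : (Fin n → ℝ) → ℝ}, (∀ Q ∈ Pset, ∫ x, ξ x ∂Q ≤ 1 + M₀) →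
      BddAbove (Set.range fun Q : Pset => ∫ x, ξ x ∂(Q : Measure (Fin n → ℝ))) := by
    intro ξ h
    exact ⟨1 + M₀, by rintro r ⟨Q, rfl⟩; exact h Q Q.2⟩
  -- P-integrability of X
  have hXP : Integrable X P := by
    have hmin_int : ∀ N : ℕ, Integrable (fun y => min |X y| (N:ℝ)) P := by
      intro N
      refine (integrable_const (N:ℝ)).mono'
        ((hXmeas.abs.min measurable_const).aestronglyMeasurable)
        (Filter.Eventually.of_forall fun y => ?_)
      rw [Real.norm_eq_abs, abs_of_nonneg (le_min (abs_nonneg _) (Nat.cast_nonneg N))]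
      exact min_le_right _ _
    have key : ∀ N : ℕ, ∫ y, min |X y| (N:ℝ) ∂P ≤ 1 + M₀ := by
      intro N
      have hblip : BLip (fun y : Fin n → ℝ => min |X y| (N:ℝ)) := by
        refine ⟨⟨1, LipschitzWith.of_dist_le_mul fun x y => ?_⟩, N, fun y => ?_⟩
        · rw [Real.dist_eq]
          push_cast
          rw [one_mul]
          refine le_trans (abs_min_sub_min_le_max _ _ _ _) ?_
          rw [sub_self, abs_zero]
          refine max_le (le_trans (abs_abs_sub_abs_le_abs_sub _ _) ?_) dist_nonneg
          rw [← Real.dist_eq]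
          exact dist_le_pi_dist x y _
        · rw [abs_of_nonneg (le_min (abs_nonneg _) (Nat.cast_nonneg N))]
          exact min_le_right _ _
      refine le_trans (hP _ hblip) (ciSup_le fun Q => ?_)
      haveI := hprob Q Q.2
      have h2 : ∫ y, min |X y| (N:ℝ) ∂(Q : Measure (Fin n → ℝ)) ≤
          ∫ y, (1 + |X y| ^ (1 + α)) ∂(Q : Measure (Fin n → ℝ)) := by
        refine integral_mono ?_ ((integrable_const 1).add (hint Q Q.2)) fun y => ?_
        · refine (integrable_const (N:ℝ)).mono'
            ((hXmeas.abs.min measurable_const).aestronglyMeasurable)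
            (Filter.Eventually.of_forall fun y => ?_)
          rw [Real.norm_eq_abs, abs_of_nonneg (le_min (abs_nonneg _) (Nat.cast_nonneg N))]
          exact min_le_right _ _
        · exact le_trans (min_le_left _ _) (habs (X y))
      rw [integral_add (integrable_const 1) (hint Q Q.2), integral_const] at h2
      simp only [measure_univ, probReal_univ, smul_eq_mul, one_mul] at h2
      linarith [hM₀ Q Q.2]
    refine ⟨hXmeas.aestronglyMeasurable, ?_⟩
    have h1 : ∀ N : ℕ, ∫⁻ y, ENNReal.ofReal (min |X y| (N:ℝ)) ∂P ≤ ENNReal.ofReal (1 + M₀) := by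
      intro N
      rw [← ofReal_integral_eq_lintegral_ofReal (hmin_int N)
        (Filter.Eventually.of_forall fun y => le_min (abs_nonneg _) (Nat.cast_nonneg N))]
      exact ENNReal.ofReal_le_ofReal (key N)
    have hptw : ∀ y, (‖X y‖₊ : ENNReal) = ⨆ N : ℕ, ENNReal.ofReal (min |X y| (N:ℝ)) := by
      intro y
      rw [← enorm_eq_nnnorm, ← ofReal_norm, Real.norm_eq_abs]
      refine le_antisymm ?_ (iSup_le fun N => ENNReal.ofReal_le_ofReal (min_le_left _ _))
      refine le_iSup_of_le ⌈|X y|⌉₊ ?_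
      rw [min_eq_left (Nat.le_ceil _)]
    have h2 : ∫⁻ y, (‖X y‖₊ : ENNReal) ∂P ≤ ENNReal.ofReal (1 + M₀) := by
      calc ∫⁻ y, (‖X y‖₊ : ENNReal) ∂P
          = ∫⁻ y, ⨆ N : ℕ, ENNReal.ofReal (min |X y| (N:ℝ)) ∂P := by
            congr 1; funext y; exact hptw y
        _ = ⨆ N : ℕ, ∫⁻ y, ENNReal.ofReal (min |X y| (N:ℝ)) ∂P := by
            refine lintegral_iSup (fun N => ?_) (fun N M hNM y => ?_)
            · exact (hXmeas.abs.min measurable_const).ennreal_ofReal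
            · exact ENNReal.ofReal_le_ofReal
                (min_le_min le_rfl (Nat.cast_le.2 hNM))
        _ ≤ ENNReal.ofReal (1 + M₀) := iSup_le h1
    exact lt_of_le_of_lt h2 ENNReal.ofReal_lt_top
  -- key testing inequality
  have key : ∀ e : ℝ, |e| = 1 → ∀ ψ : (Fin j → ℝ) → ℝ, BLip ψ → (∀ z, 0 ≤ ψ z) →
      (∀ z, ψ z ≤ 1) →
      0 ≤ ∫ y, ψ (π y) * (SE n Pset (fun y => e * X y) - e * X y) ∂P := by
    intro e he ψ hψb hψ0 hψ1
    have heX : ∀ y, |e * X y| = |X y| := fun y => by rw [abs_mul, he, one_mul]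
    have hψcont : Continuous ψ := hψb.1.choose_spec.continuous
    set ce := SE n Pset (fun y => e * X y) with hce
    have heXQ : ∀ Q ∈ Pset, Integrable (fun y => e * X y) Q := fun Q hQ =>
      ((hQfacts Q hQ).1).const_mul e
    have heXb : ∀ Q ∈ Pset, ∫ y, e * X y ∂Q ≤ 1 + M₀ := by
      intro Q hQ
      have h1 : |∫ y, e * X y ∂Q| ≤ ∫ y, |e * X y| ∂Q := by
        have := norm_integral_le_integral_norm (μ := Q) (fun y => e * X y)
        simp only [Real.norm_eq_abs] at this
        exact this
      have h2 : ∫ y, |e * X y| ∂Q = ∫ y, |X y| ∂Q := by simp only [heX]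
      rw [h2] at h1
      linarith [le_abs_self (∫ y, e * X y ∂Q), (hQfacts Q hQ).2]
    set cN : ℕ → ℝ := fun N => SE n Pset (fun y => trunc N (e * X y)) with hcNdef
    have hgN_int : ∀ (N : ℕ), ∀ Q ∈ Pset, Integrable (fun y => trunc N (e * X y)) Q := by
      intro N Q hQ
      haveI := hprob Q hQ
      refine (integrable_const ((N:ℝ))).mono'
        (((lip_trunc N).continuous.measurable.comp (hXmeas.const_mul e)).aestronglyMeasurable)
        (Filter.Eventually.of_forall fun y => ?_)
      rw [Real.norm_eq_abs]
      exact trunc_abs_le _ _ (Nat.cast_nonneg N)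
    have hgN_b : ∀ (N : ℕ), ∀ Q ∈ Pset, ∫ y, trunc N (e * X y) ∂Q ≤ 1 + M₀ := by
      intro N Q hQ
      have h1 : |∫ y, trunc N (e * X y) ∂Q| ≤ ∫ y, |trunc N (e * X y)| ∂Q := by
        have := norm_integral_le_integral_norm (μ := Q) (fun y => trunc N (e * X y))
        simp only [Real.norm_eq_abs] at this
        exact this
      have h2 : ∫ y, |trunc N (e * X y)| ∂Q ≤ ∫ y, |X y| ∂Q := by
        refine integral_mono (hgN_int N Q hQ).abs ((hQfacts Q hQ).1).abs fun y => ?_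
        rw [← heX y]
        exact trunc_abs_le' _ _ (Nat.cast_nonneg N)
      linarith [le_abs_self (∫ y, trunc N (e * X y) ∂Q), (hQfacts Q hQ).2]
    have hcN_le : ∀ N : ℕ, 1 ≤ N → cN N ≤ ce + M₀ / (N:ℝ) ^ α := by
      intro N hN
      have hN1 : (1:ℝ) ≤ (N:ℝ) := by exact_mod_cast hN
      have hNα : (0:ℝ) < (N:ℝ) ^ α := Real.rpow_pos_of_pos (by linarith) α
      refine ciSup_le fun Q => ?_
      haveI := hprob Q Q.2
      have hdiff : ∫ y, (trunc N (e * X y) - e * X y) ∂(Q : Measure (Fin n → ℝ)) ≤ M₀ / (N:ℝ) ^ α := by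
        have hptw : ∀ y, trunc N (e * X y) - e * X y ≤ |X y| ^ (1 + α) / (N:ℝ) ^ α := by
          intro y
          refine le_trans (le_abs_self _) ?_
          have h3 := trunc_sub_le_rpow (N := (N:ℝ)) (t := e * X y) hN1 hα
          rwa [heX y] at h3
        refine le_trans (integral_mono ((hgN_int N Q Q.2).sub (heXQ Q Q.2))
          ((hint Q Q.2).div_const _) hptw) ?_
        rw [integral_div]
        gcongr
        exact hM₀ Q Q.2
      rw [integral_sub (hgN_int N Q Q.2) (heXQ Q Q.2)] at hdiff
      have hle_ce : ∫ y, e * X y ∂(Q : Measure (Fin n → ℝ)) ≤ ce := le_ciSup (bdd heXb) Q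
      linarith
    have hintPψ : Integrable (fun x => ψ (π x)) P := by
      refine (integrable_const (1:ℝ)).mono'
        (hψcont.measurable.comp hπ).aestronglyMeasurable
        (Filter.Eventually.of_forall fun y => ?_)
      rw [Real.norm_eq_abs, abs_of_nonneg (hψ0 _)]
      exact hψ1 _
    have hψP0 : 0 ≤ ∫ y, ψ (π y) ∂P := integral_nonneg fun y => hψ0 _
    have hψP1 : ∫ y, ψ (π y) ∂P ≤ 1 := by
      have h2 := integral_mono hintPψ (integrable_const 1) fun y => hψ1 (π y)
      simpa using h2
    have hgNmeasP : ∀ N : ℕ, AEStronglyMeasurable (fun x => ψ (π x) * trunc N (e * X x)) P :=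
      fun N => ((hψcont.measurable.comp hπ).mul
        ((lip_trunc N).continuous.measurable.comp (hXmeas.const_mul e))).aestronglyMeasurable
    have hintPgN : ∀ N : ℕ, Integrable (fun x => ψ (π x) * trunc N (e * X x)) P := by
      intro N
      refine (integrable_const ((N:ℝ))).mono' (hgNmeasP N)
        (Filter.Eventually.of_forall fun y => ?_)
      rw [Real.norm_eq_abs, abs_mul]
      calc |ψ (π y)| * |trunc N (e * X y)| ≤ 1 * (N:ℝ) := by
            refine mul_le_mul ?_ (trunc_abs_le _ _ (Nat.cast_nonneg N)) (abs_nonneg _)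
              zero_le_one
            rw [abs_of_nonneg (hψ0 _)]; exact hψ1 _
        _ = (N:ℝ) := one_mul _
    have hmain : ∀ N : ℕ, 1 ≤ N →
        ∫ y, ψ (π y) * trunc N (e * X y) ∂P ≤ ce * ∫ y, ψ (π y) ∂P + M₀ / (N:ℝ) ^ α := by
      intro N hN
      have hN1 : (1:ℝ) ≤ (N:ℝ) := by exact_mod_cast hN
      have hNα : (0:ℝ) < (N:ℝ) ^ α := Real.rpow_pos_of_pos (by linarith) α
      set φN : (Fin (j+1) → ℝ) → ℝ :=
        fun z => ψ (fun i : Fin j => z (Fin.castSucc i)) *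
          (trunc N (e * z (Fin.last j)) - cN N) with hφdef
      have hφb : BLip φN :=
        blip_mul (blip_comp hψb (lip_restrict Fin.castSucc))
          (blip_sub_const ⟨⟨_, (lip_trunc N).comp
              ((lip_mul_const e).comp (lip_eval (Fin.last j)))⟩,
            N, fun z => trunc_abs_le _ _ (Nat.cast_nonneg N)⟩ (cN N))
      have hLHS : (fun x : Fin n → ℝ => φN (fun i => x (Fin.castLE hjn i))) =
          fun x => ψ (π x) * (trunc N (e * X x) - cN N) := rfl
      have hinner : ∀ x : Fin n → ℝ,
          (fun x' : Fin n → ℝ => φN (Fin.snoc (fun i : Fin j => x (Fin.castLE hjn.le i))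
            (x' ⟨j, hjn⟩))) = fun x' => ψ (π x) * (trunc N (e * X x') - cN N) := by
        intro x
        funext x'
        rw [hφdef]
        simp only [Fin.snoc_castSucc, Fin.snoc_last]
        rfl
      have hSEinner : ∀ x : Fin n → ℝ,
          SE n Pset (fun x' => φN (Fin.snoc (fun i : Fin j => x (Fin.castLE hjn.le i))
            (x' ⟨j, hjn⟩))) = 0 := by
        intro x
        rw [hinner x]
        have hQint : ∀ Q : Pset, ∫ x', ψ (π x) * (trunc N (e * X x') - cN N) ∂(Q : Measure (Fin n → ℝ))
            = ψ (π x) * ((∫ x', trunc N (e * X x') ∂(Q : Measure (Fin n → ℝ))) - cN N) := by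
          intro Q
          haveI := hprob Q Q.2
          rw [integral_const_mul, integral_sub (hgN_int N Q Q.2) (integrable_const _),
            integral_const]
          simp [measure_univ]
        have hc : cN N = ⨆ Q : Pset, ∫ x', trunc N (e * X x') ∂(Q : Measure (Fin n → ℝ)) := rfl
        have hbdd2 : BddAbove
            (Set.range fun Q : Pset => ∫ x', trunc N (e * X x') ∂(Q : Measure (Fin n → ℝ))) :=
          bdd fun Q hQ => hgN_b N Q hQ
        calc SE n Pset (fun x' => ψ (π x) * (trunc N (e * X x') - cN N))
            = ⨆ Q : Pset, ψ (π x) *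
              ((∫ x', trunc N (e * X x') ∂(Q : Measure (Fin n → ℝ))) - cN N) :=
              congrArg iSup (funext hQint)
          _ = ψ (π x) * ⨆ Q : Pset,
              ((∫ x', trunc N (e * X x') ∂(Q : Measure (Fin n → ℝ))) - cN N) :=
              (Real.mul_iSup_of_nonneg (hψ0 _) _).symm
          _ = 0 := by
              rw [hc, ciSup_sub_self_nonneg hbdd2, mul_zero]
      have houter : SE n Pset (fun x => SE n Pset (fun x' =>
          φN (Fin.snoc (fun i : Fin j => x (Fin.castLE hjn.le i)) (x' ⟨j, hjn⟩)))) = 0 := by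
        rw [funext hSEinner]
        have hz : ∀ Q : Pset, ∫ _x, (0:ℝ) ∂(Q : Measure (Fin n → ℝ)) = 0 := fun Q => integral_zero _ _
        calc SE n Pset (fun _ => (0:ℝ)) = ⨆ _Q : Pset, (0:ℝ) := congrArg iSup (funext hz)
          _ = 0 := ciSup_const
      have hPN : ∫ x, φN (fun i => x (Fin.castLE hjn i)) ∂P ≤
          SE n Pset (fun x => φN (fun i => x (Fin.castLE hjn i))) :=
        hP _ (blip_comp hφb (lip_restrict (Fin.castLE hjn)))
      rw [hindep φN hφb, houter, hLHS] at hPN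
      have hexp : ∫ x, ψ (π x) * (trunc N (e * X x) - cN N) ∂P
          = ∫ x, ψ (π x) * trunc N (e * X x) ∂P - cN N * ∫ x, ψ (π x) ∂P := by
        have hfe : (fun x => ψ (π x) * (trunc N (e * X x) - cN N))
            = fun x => ψ (π x) * trunc N (e * X x) - ψ (π x) * cN N := by
          funext x; ring
        rw [hfe, integral_sub (hintPgN N) (hintPψ.mul_const _), integral_mul_const]
        ring
      rw [hexp] at hPN
      have hd0 : 0 ≤ M₀ / (N:ℝ) ^ α := div_nonneg hM₀0 hNα.le
      nlinarith [hcN_le N hN]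
    -- pass to the limit
    have hintPeX : Integrable (fun y => ψ (π y) * (e * X y)) P := by
      refine hXP.abs.mono'
        ((hψcont.measurable.comp hπ).mul (hXmeas.const_mul e)).aestronglyMeasurable
        (Filter.Eventually.of_forall fun y => ?_)
      rw [Real.norm_eq_abs, abs_mul, heX]
      calc |ψ (π y)| * |X y| ≤ 1 * |X y| := by
            refine mul_le_mul_of_nonneg_right ?_ (abs_nonneg _)
            rw [abs_of_nonneg (hψ0 _)]; exact hψ1 _
        _ = |X y| := one_mul _
    have hA : Filter.Tendsto (fun N : ℕ => ∫ y, ψ (π y) * trunc N (e * X y) ∂P)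
        Filter.atTop (nhds (∫ y, ψ (π y) * (e * X y) ∂P)) := by
      refine tendsto_integral_of_dominated_convergence (fun y => |X y|) hgNmeasP hXP.abs
        (fun N => Filter.Eventually.of_forall fun y => ?_)
        (Filter.Eventually.of_forall fun y => ?_)
      · rw [Real.norm_eq_abs, abs_mul]
        calc |ψ (π y)| * |trunc N (e * X y)| ≤ 1 * |e * X y| := by
              refine mul_le_mul ?_ (trunc_abs_le' _ _ (Nat.cast_nonneg N)) (abs_nonneg _)
                zero_le_one
              rw [abs_of_nonneg (hψ0 _)]; exact hψ1 _
          _ = |X y| := by rw [one_mul, heX]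
      · refine Filter.Tendsto.congr' ?_ tendsto_const_nhds
        filter_upwards [Filter.eventually_ge_atTop ⌈|e * X y|⌉₊] with N hN
        have hle : |e * X y| ≤ (N:ℝ) := le_trans (Nat.le_ceil _) (by exact_mod_cast hN)
        rw [trunc_eq_of_abs_le hle]
    have hB : Filter.Tendsto (fun N : ℕ => ce * ∫ y, ψ (π y) ∂P + M₀ / (N:ℝ) ^ α)
        Filter.atTop (nhds (ce * ∫ y, ψ (π y) ∂P)) := by
      have hNinf : Filter.Tendsto (fun N : ℕ => ((N:ℝ)) ^ α) Filter.atTop Filter.atTop :=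
        (tendsto_rpow_atTop hα).comp tendsto_natCast_atTop_atTop
      have h0 : Filter.Tendsto (fun N : ℕ => M₀ / (N:ℝ) ^ α) Filter.atTop (nhds 0) :=
        Filter.Tendsto.div_atTop tendsto_const_nhds hNinf
      simpa using tendsto_const_nhds.add h0
    have hfinal : ∫ y, ψ (π y) * (e * X y) ∂P ≤ ce * ∫ y, ψ (π y) ∂P := by
      refine le_of_tendsto_of_tendsto hA hB ?_
      filter_upwards [Filter.eventually_ge_atTop 1] with N hN
      exact hmain N hN
    have hfe : (fun y => ψ (π y) * (ce - e * X y))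
        = fun y => ψ (π y) * ce - ψ (π y) * (e * X y) := by funext y; ring
    rw [hfe, integral_sub (hintPψ.mul_const _) hintPeX, integral_mul_const]
    linarith
  -- conclude via conditional expectation
  have hm : MeasurableSpace.comap π inferInstance ≤
      (inferInstance : MeasurableSpace (Fin n → ℝ)) := hπ.comap_le
  haveI hfin : IsFiniteMeasure (P.trim hm) := isFiniteMeasure_trim hm
  have tests1 : ∀ ψ : (Fin j → ℝ) → ℝ, BLip ψ → (∀ z, 0 ≤ ψ z) → (∀ z, ψ z ≤ 1) →
      0 ≤ ∫ y, ψ (π y) * (SE n Pset X - X y) ∂P := by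
    intro ψ h0 h1 h2
    have h3 := key 1 (by norm_num) ψ h0 h1 h2
    simp only [one_mul] at h3
    exact h3
  have tests2 : ∀ ψ : (Fin j → ℝ) → ℝ, BLip ψ → (∀ z, 0 ≤ ψ z) → (∀ z, ψ z ≤ 1) →
      0 ≤ ∫ y, ψ (π y) * (SE n Pset (fun y => -(y ⟨j, hjn⟩)) + X y) ∂P := by
    intro ψ h0 h1 h2
    have h3 := key (-1) (by norm_num) ψ h0 h1 h2
    have he : SE n Pset (fun y => (-1 : ℝ) * X y) = SE n Pset (fun y => -(y ⟨j, hjn⟩)) :=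
      congrArg (SE n Pset) (funext fun y => by rw [neg_one_mul])
    rw [he] at h3
    simp only [neg_one_mul, sub_neg_eq_add] at h3
    exact h3
  have hup : 0 ≤ᵐ[P] fun y => SE n Pset X -
      (P[X | MeasurableSpace.comap π inferInstance]) y := by
    refine ae_nonneg_of_setIntegral_m hm P
      (stronglyMeasurable_const.sub stronglyMeasurable_condExp)
      ((integrable_const _).sub integrable_condExp) fun s hs => ?_
    obtain ⟨B, hB, rfl⟩ := hs
    have h4 := setIntegral_nonneg_of_blip_tests P π hπ (fun y => SE n Pset X - X y)
      ((integrable_const _).sub hXP) tests1 B hB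
    rw [integral_sub ((integrable_const _).integrableOn) (integrable_condExp.integrableOn),
      setIntegral_condExp hm hXP (⟨B, hB, rfl⟩ :
        MeasurableSet[MeasurableSpace.comap π inferInstance] (π ⁻¹' B))]
    rw [integral_sub ((integrable_const _).integrableOn) hXP.integrableOn] at h4
    exact h4
  have hlo : 0 ≤ᵐ[P] fun y => SE n Pset (fun y => -(y ⟨j, hjn⟩)) +
      (P[X | MeasurableSpace.comap π inferInstance]) y := by
    refine ae_nonneg_of_setIntegral_m hm P
      (stronglyMeasurable_const.add stronglyMeasurable_condExp)
      ((integrable_const _).add integrable_condExp) fun s hs => ?_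
    obtain ⟨B, hB, rfl⟩ := hs
    have h4 := setIntegral_nonneg_of_blip_tests P π hπ
      (fun y => SE n Pset (fun y => -(y ⟨j, hjn⟩)) + X y)
      ((integrable_const _).add hXP) tests2 B hB
    rw [integral_add ((integrable_const _).integrableOn) (integrable_condExp.integrableOn),
      setIntegral_condExp hm hXP (⟨B, hB, rfl⟩ :
        MeasurableSet[MeasurableSpace.comap π inferInstance] (π ⁻¹' B))]
    rw [integral_add ((integrable_const _).integrableOn) hXP.integrableOn] at h4
    exact h4
  filter_upwards [hup, hlo] with y h1 h2
  simp only [Pi.zero_apply] at h1 h2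
  exact ⟨by linarith, by linarith⟩
end

section
/- Let 𝒫 be a nonempty set of Borel probability measures on ℝ^n with sublinear expectation Ê[ξ] := sup_{P∈𝒫} E_P[ξ], whose coordinate random variables X_1,…,X_n are independent under Ê (i.e., for each 1 ≤ j < n, X_{j+1} is independent of (X_1,…,X_j) under Ê). If Q_1,…,Q_n are Borel probability measures on ℝ such that E_{Q_i}[ψ] ≤ Ê[ψ(X_i)] for every bounded Lipschitz ψ : ℝ → ℝ and every i ≤ n, then the product measure Q_1 ⊗ ⋯ ⊗ Q_n satisfies E_{Q_1⊗⋯⊗Q_n}[φ] ≤ Ê[φ] for every bounded Lipschitz function φ : ℝ^n → ℝ. -/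
open MeasureTheory

section Helpers

lemma lipschitz_snoc_left {j : ℕ} (t : ℝ) :
    LipschitzWith 1 (fun x : Fin j → ℝ => (Fin.snoc x t : Fin (j+1) → ℝ)) := by
  apply LipschitzWith.of_dist_le_mul
  intro x y
  rw [NNReal.coe_one, one_mul]
  refine (dist_pi_le_iff dist_nonneg).2 fun i => ?_
  refine Fin.lastCases ?_ (fun k => ?_) i
  · simpa [Fin.snoc_last] using dist_nonneg
  · simp only [Fin.snoc_castSucc]
    exact dist_le_pi_dist x y k

lemma lipschitz_snoc_right {j : ℕ} (x : Fin j → ℝ) :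
    LipschitzWith 1 (fun t : ℝ => (Fin.snoc x t : Fin (j+1) → ℝ)) := by
  apply LipschitzWith.of_dist_le_mul
  intro s t
  rw [NNReal.coe_one, one_mul]
  refine (dist_pi_le_iff dist_nonneg).2 fun i => ?_
  refine Fin.lastCases ?_ (fun k => ?_) i
  · simpa [Fin.snoc_last] using dist_nonneg
  · simp only [Fin.snoc_castSucc, dist_self]; exact dist_nonneg

lemma lipschitz_proj {j n : ℕ} (h : j ≤ n) :
    LipschitzWith 1 (fun x : Fin n → ℝ => (fun i : Fin j => x (Fin.castLE h i))) := by
  apply LipschitzWith.of_dist_le_mul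
  intro x y
  rw [NNReal.coe_one, one_mul]
  exact (dist_pi_le_iff dist_nonneg).2 fun i => dist_le_pi_dist x y _

lemma lipschitz_eval {n : ℕ} (i : Fin n) :
    LipschitzWith 1 (fun x : Fin n → ℝ => x i) := by
  apply LipschitzWith.of_dist_le_mul
  intro x y
  rw [NNReal.coe_one, one_mul]
  exact dist_le_pi_dist x y i

lemma BLip.comp_lip {E F : Type*} [PseudoMetricSpace E] [PseudoMetricSpace F]
    {φ : F → ℝ} (hφ : BLip φ) {f : E → F} (hf : LipschitzWith 1 f) :
    BLip (fun x => φ (f x)) := by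
  obtain ⟨⟨K, hK⟩, M, hM⟩ := hφ
  exact ⟨⟨K, by simpa [Function.comp_def] using (hK.comp hf)⟩, M, fun x => hM _⟩

lemma BLip.integrable {E : Type*} [MeasurableSpace E] [PseudoMetricSpace E]
    [BorelSpace E] {φ : E → ℝ} (hφ : BLip φ) (μ : Measure E) [IsFiniteMeasure μ] :
    Integrable φ μ := by
  obtain ⟨⟨K, hK⟩, M, hM⟩ := hφ
  exact Integrable.mono' (integrable_const M)
    (hK.continuous.aestronglyMeasurable)
    (Filter.Eventually.of_forall fun x => by simpa using hM x)

variable {n : ℕ} {Pset : Set (Measure (Fin n → ℝ))}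

lemma SE_bddAbove (hprob : ∀ P ∈ Pset, IsProbabilityMeasure P)
    {ξ : (Fin n → ℝ) → ℝ} {M : ℝ} (hM : ∀ x, |ξ x| ≤ M) :
    BddAbove (Set.range fun P : Pset => ∫ x, ξ x ∂(P : Measure (Fin n → ℝ))) := by
  refine ⟨M, ?_⟩
  rintro r ⟨⟨P, hP⟩, rfl⟩
  haveI := hprob P hP
  calc ∫ x, ξ x ∂P ≤ |∫ x, ξ x ∂P| := le_abs_self _
    _ ≤ M := by
        have := norm_integral_le_of_norm_le_const (C := M)
          (Filter.Eventually.of_forall fun x => by simpa using hM x) (μ := P) (f := ξ)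
        simpa using this

lemma SE_const (hne : Pset.Nonempty) (hprob : ∀ P ∈ Pset, IsProbabilityMeasure P)
    (c : ℝ) : SE n Pset (fun _ => c) = c := by
  haveI : Nonempty Pset := hne.to_subtype
  have : ∀ P : Pset, ∫ _ : Fin n → ℝ, c ∂(P : Measure (Fin n → ℝ)) = c := by
    rintro ⟨P, hP⟩
    haveI := hprob P hP
    simp
  simp only [SE, this, ciSup_const]

lemma BLip_SE {m : ℕ} (hprob : ∀ P ∈ Pset, IsProbabilityMeasure P)
    {F : (Fin m → ℝ) → (Fin n → ℝ) → ℝ} {K : NNReal} {M : ℝ}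
    (hlip : ∀ x', LipschitzWith K (fun x => F x x'))
    (hmeas : ∀ x, BLip (F x))
    (hM : ∀ x x', |F x x'| ≤ M) :
    BLip (fun x => SE n Pset (F x)) ∧ ∀ x, |SE n Pset (F x)| ≤ M := by
  have hM0 : 0 ≤ M := le_trans (abs_nonneg _) (hM (fun _ => 0) (fun _ => 0))
  have gle : ∀ x y, SE n Pset (F x) ≤ SE n Pset (F y) + K * dist x y := by
    intro x y
    rcases Set.eq_empty_or_nonempty Pset with he | he
    · haveI : IsEmpty (↥Pset) := Set.isEmpty_coe_sort.2 he
      simp only [SE]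
      rw [Real.iSup_of_isEmpty, Real.iSup_of_isEmpty]
      positivity
    haveI : Nonempty Pset := he.to_subtype
    refine ciSup_le fun ⟨P, hP⟩ => ?_
    haveI := hprob P hP
    have h1 : ∫ x', F x x' ∂P ≤ ∫ x', F y x' ∂P + K * dist x y := by
      have hpt : ∀ x', F x x' ≤ F y x' + K * dist x y := by
        intro x'
        have := (hlip x').dist_le_mul x y
        rw [Real.dist_eq, abs_sub_le_iff] at this
        linarith [this.1]
      calc ∫ x', F x x' ∂P ≤ ∫ x', (F y x' + K * dist x y) ∂P :=
            integral_mono ((hmeas x).integrable P)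
              (((hmeas y).integrable P).add (integrable_const _)) hpt
        _ = ∫ x', F y x' ∂P + K * dist x y := by
            rw [integral_add ((hmeas y).integrable P) (integrable_const _)]
            simp
    refine h1.trans (add_le_add ?_ le_rfl)
    exact le_ciSup (SE_bddAbove hprob (hM y)) ⟨P, hP⟩
  have gbd : ∀ x, |SE n Pset (F x)| ≤ M := by
    intro x
    rw [abs_le]
    constructor
    · rcases Set.eq_empty_or_nonempty Pset with he | he
      · haveI : IsEmpty (↥Pset) := Set.isEmpty_coe_sort.2 he
        simp only [SE]
        rw [Real.iSup_of_isEmpty]; linarith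
      haveI : Nonempty Pset := he.to_subtype
      obtain ⟨P, hP⟩ := he
      haveI := hprob P hP
      refine le_trans ?_ (le_ciSup (SE_bddAbove hprob (hM x)) ⟨P, hP⟩)
      have : ∫ x', (-M : ℝ) ∂P ≤ ∫ x', F x x' ∂P :=
        integral_mono (integrable_const _) ((hmeas x).integrable P)
          (fun x' => neg_le_of_abs_le (hM x x'))
      simpa using this
    · rcases Set.eq_empty_or_nonempty Pset with he | he
      · haveI : IsEmpty (↥Pset) := Set.isEmpty_coe_sort.2 he
        simp only [SE]
        rw [Real.iSup_of_isEmpty]; linarith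
      haveI : Nonempty Pset := he.to_subtype
      refine ciSup_le fun ⟨P, hP⟩ => ?_
      haveI := hprob P hP
      have := norm_integral_le_of_norm_le_const (C := M)
        (Filter.Eventually.of_forall fun x' => by simpa using hM x x') (μ := P) (f := F x)
      simp only [measure_univ, ENNReal.toReal_one, probReal_univ, mul_one, Real.norm_eq_abs] at this
      exact (le_abs_self _).trans this
  refine ⟨⟨⟨K, ?_⟩, M, gbd⟩, gbd⟩
  apply LipschitzWith.of_dist_le_mul
  intro x y
  rw [Real.dist_eq, abs_sub_le_iff]
  constructor
  · linarith [gle x y]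
  · have := gle y x
    rw [dist_comm] at this
    linarith

lemma BLip_param_integral (ν : Measure ℝ) [IsProbabilityMeasure ν] {j : ℕ}
    {φ : (Fin (j+1) → ℝ) → ℝ} (hφ : BLip φ) :
    BLip (fun x : Fin j → ℝ => ∫ t, φ (Fin.snoc x t) ∂ν) := by
  obtain ⟨⟨K, hK⟩, M, hM⟩ := hφ
  have hint : ∀ x : Fin j → ℝ, Integrable (fun t => φ (Fin.snoc x t)) ν := by
    intro x
    exact (BLip.comp_lip ⟨⟨K, hK⟩, M, hM⟩ (lipschitz_snoc_right x)).integrable ν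
  constructor
  · refine ⟨K, LipschitzWith.of_dist_le_mul fun x y => ?_⟩
    rw [Real.dist_eq, ← integral_sub (hint x) (hint y)]
    have := norm_integral_le_of_norm_le_const (C := (K : ℝ) * dist x y)
      (μ := ν) (f := fun t => φ (Fin.snoc x t) - φ (Fin.snoc y t))
      (Filter.Eventually.of_forall fun t => by
        have h1 := hK.dist_le_mul (Fin.snoc x t) (Fin.snoc y t)
        have h2 := (lipschitz_snoc_left (j := j) t).dist_le_mul x y
        rw [NNReal.coe_one, one_mul] at h2
        rw [Real.norm_eq_abs, ← Real.dist_eq]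
        exact h1.trans (by nlinarith [K.coe_nonneg]))
    simpa using this
  · refine ⟨M, fun x => ?_⟩
    have hM0 : 0 ≤ M := le_trans (abs_nonneg _) (hM (fun _ => 0))
    have := norm_integral_le_of_norm_le_const (C := M) (μ := ν)
      (f := fun t => φ (Fin.snoc x t))
      (Filter.Eventually.of_forall fun t => by simpa using hM _)
    simpa using this

lemma fubini_snoc {j : ℕ} (μ : Fin (j+1) → Measure ℝ) [∀ i, IsProbabilityMeasure (μ i)]
    {φ : (Fin (j+1) → ℝ) → ℝ} (hφ : BLip φ) :
    ∫ z, φ z ∂(Measure.pi μ) =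
      ∫ x, ∫ t, φ (Fin.snoc x t) ∂(μ (Fin.last j))
        ∂(Measure.pi fun k : Fin j => μ (Fin.castSucc k)) := by
  obtain ⟨⟨K, hK⟩, M, hM⟩ := hφ
  have hmp := measurePreserving_piFinSuccAbove μ (Fin.last j)
  set e := MeasurableEquiv.piFinSuccAbove (fun _ : Fin (j+1) => ℝ) (Fin.last j) with he
  have hmeq : (fun k : Fin j => μ ((Fin.last j).succAbove k)) =
      fun k : Fin j => μ (Fin.castSucc k) := by
    funext k; rw [Fin.succAbove_last]
  rw [hmeq] at hmp
  have h1 : ∫ z, φ z ∂(Measure.pi μ) =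
      ∫ p : ℝ × (Fin j → ℝ), φ (e.symm p)
        ∂((μ (Fin.last j)).prod (Measure.pi fun k : Fin j => μ (Fin.castSucc k))) := by
    rw [← (hmp.symm e).integral_comp e.symm.measurableEmbedding φ]
  have hsymm : ∀ p : ℝ × (Fin j → ℝ), e.symm p = Fin.snoc p.2 p.1 := by
    intro p
    simp [he, MeasurableEquiv.piFinSuccAbove, Fin.insertNthEquiv, Fin.insertNth_last']
  rw [h1]
  have hint : Integrable (fun p : ℝ × (Fin j → ℝ) => φ (e.symm p))
      ((μ (Fin.last j)).prod (Measure.pi fun k : Fin j => μ (Fin.castSucc k))) := by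
    refine Integrable.mono' (integrable_const M)
      ((hK.continuous.measurable.comp e.symm.measurable).aestronglyMeasurable)
      (Filter.Eventually.of_forall fun p => by simpa using hM _)
  rw [integral_prod _ hint]
  rw [integral_integral_swap]
  · simp only [hsymm]
  · simpa only [hsymm, Function.uncurry_def] using hint

end Helpers

/-- If the coordinates are independent under `Ê` and each `Q_i` is dominated by
`Ê` on bounded Lipschitz functions of the `i`-th coordinate, then the product
measure `Q_1 ⊗ ⋯ ⊗ Q_n` is dominated by `Ê` on bounded Lipschitz functions. -/
theorem product_measure_dominated
    (n : ℕ)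
    (Pset : Set (Measure (Fin n → ℝ))) (hne : Pset.Nonempty)
    (hprob : ∀ P ∈ Pset, IsProbabilityMeasure P)
    (hindep : ∀ j : ℕ, 1 ≤ j → ∀ hjn : j < n,
      ∀ φ : (Fin (j + 1) → ℝ) → ℝ, BLip φ →
        SE n Pset (fun x => φ (fun i => x (Fin.castLE hjn i))) =
          SE n Pset (fun x => SE n Pset (fun x' =>
            φ (Fin.snoc (fun i : Fin j => x (Fin.castLE hjn.le i)) (x' ⟨j, hjn⟩)))))
    (Q : Fin n → Measure ℝ) [∀ i, IsProbabilityMeasure (Q i)]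
    (hQ : ∀ i : Fin n, ∀ ψ : ℝ → ℝ, BLip ψ →
      ∫ t, ψ t ∂(Q i) ≤ SE n Pset (fun x => ψ (x i))) :
    ∀ φ : (Fin n → ℝ) → ℝ, BLip φ →
      ∫ x, φ x ∂(Measure.pi Q) ≤ SE n Pset φ := by
  -- main induction: claim for every j ≤ n
  have main : ∀ j : ℕ, ∀ hjn : j ≤ n, ∀ φ : (Fin j → ℝ) → ℝ, BLip φ →
      ∫ x, φ x ∂(Measure.pi fun i : Fin j => Q (Fin.castLE hjn i)) ≤
        SE n Pset (fun x => φ (fun i => x (Fin.castLE hjn i))) := by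
    intro j
    induction j with
    | zero =>
      intro hjn φ hφ
      have hc : ∀ x : Fin 0 → ℝ, φ x = φ (fun i => i.elim0) :=
        fun x => congrArg φ (Subsingleton.elim _ _)
      have h1 : ∫ x, φ x ∂(Measure.pi fun i : Fin 0 => Q (Fin.castLE hjn i)) =
          φ (fun i => i.elim0) := by
        rw [show φ = fun _ => φ (fun i : Fin 0 => i.elim0) from funext hc]
        haveI : IsProbabilityMeasure (Measure.pi fun i : Fin 0 => Q (Fin.castLE hjn i)) :=
          inferInstance
        simp
      have h2 : SE n Pset (fun x => φ (fun i => x (Fin.castLE hjn i))) =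
          φ (fun i => i.elim0) := by
        rw [show (fun x : Fin n → ℝ => φ (fun i => x (Fin.castLE hjn i))) =
            fun _ => φ (fun i : Fin 0 => i.elim0) from funext fun x => hc _]
        exact SE_const hne hprob _
      rw [h1, h2]
    | succ j IH =>
      intro hjn1 φ hφ
      have hjn : j < n := lt_of_lt_of_le (Nat.lt_succ_self j) hjn1
      set i₀ : Fin n := ⟨j, hjn⟩ with hi₀
      obtain ⟨⟨K, hK⟩, M, hM⟩ := id hφ
      -- the function g x = Ê[φ(x, X_{j+1})]
      set g : (Fin j → ℝ) → ℝ :=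
        fun x => SE n Pset (fun x' => φ (Fin.snoc x (x' i₀))) with hgdef
      have hgpair := BLip_SE (m := j) hprob
        (F := fun x x' => φ (Fin.snoc x (x' i₀))) (K := K) (M := M)
        (fun x' => by simpa [Function.comp_def] using hK.comp (lipschitz_snoc_left (x' i₀)))
        (fun x => hφ.comp_lip (by simpa [Function.comp_def] using (lipschitz_snoc_right x).comp (lipschitz_eval i₀)))
        (fun x x' => hM _)
      have hg : BLip g := hgpair.1
      -- the iterated-integral function
      set φj : (Fin j → ℝ) → ℝ := fun x => ∫ t, φ (Fin.snoc x t) ∂(Q i₀) with hφjdef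
      have hφj : BLip φj := BLip_param_integral (Q i₀) hφ
      -- pointwise: φj ≤ g
      have hptwise : ∀ x, φj x ≤ g x := by
        intro x
        exact hQ i₀ (fun t => φ (Fin.snoc x t)) (hφ.comp_lip (lipschitz_snoc_right x))
      -- Fubini
      haveI : ∀ i : Fin (j+1), IsProbabilityMeasure (Q (Fin.castLE hjn1 i)) :=
        fun i => inferInstance
      have hfub : ∫ x, φ x ∂(Measure.pi fun i : Fin (j+1) => Q (Fin.castLE hjn1 i)) =
          ∫ x, φj x ∂(Measure.pi fun k : Fin j => Q (Fin.castLE hjn.le k)) := by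
        rw [fubini_snoc (fun i : Fin (j+1) => Q (Fin.castLE hjn1 i)) hφ]
        rfl
      rw [hfub]
      have step1 : ∫ x, φj x ∂(Measure.pi fun k : Fin j => Q (Fin.castLE hjn.le k)) ≤
          ∫ x, g x ∂(Measure.pi fun k : Fin j => Q (Fin.castLE hjn.le k)) :=
        integral_mono (hφj.integrable _) (hg.integrable _) hptwise
      have step2 := IH hjn.le g hg
      refine (step1.trans step2).trans (le_of_eq ?_)
      -- finally compare SE (g ∘ proj_j) with SE (φ ∘ proj_{j+1})
      rcases Nat.eq_zero_or_pos j with hj0 | hj0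
      · subst hj0
        -- j = 0 : both sides are constants
        set z0 : Fin 0 → ℝ := fun i => i.elim0 with hz0
        have hgc : ∀ x : Fin n → ℝ, g (fun i : Fin 0 => x (Fin.castLE hjn.le i)) = g z0 :=
          fun x => congrArg g (Subsingleton.elim _ _)
        have hφc : (fun x : Fin n → ℝ => φ (fun i : Fin 1 => x (Fin.castLE hjn1 i))) =
            fun x => φ (Fin.snoc z0 (x i₀)) := by
          funext x
          refine congrArg φ (funext fun i => ?_)
          have hi : i = Fin.last 0 := Subsingleton.elim _ _
          subst hi
          rw [Fin.snoc_last]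
          rfl
        rw [show (fun x : Fin n → ℝ => g (fun i : Fin 0 => x (Fin.castLE hjn.le i))) =
            fun _ => g z0 from funext hgc, SE_const hne hprob]
        rw [hφc]
      · exact (hindep j hj0 hjn φ hφ).symm
  intro φ hφ
  have h := main n le_rfl φ hφ
  have e1 : (fun i : Fin n => Q (Fin.castLE le_rfl i)) = Q :=
    funext fun i => congrArg Q (Fin.ext rfl)
  have e2 : (fun x : Fin n → ℝ => φ (fun i => x (Fin.castLE le_rfl i))) = φ := by
    funext x
    exact congrArg φ (funext fun i => congrArg x (Fin.ext rfl))
  rw [e1, e2] at h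
  exact h
end
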